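/- Let I be a nonempty set and (G,+,·) a skew left brace. On S = I×G×I define (i,g,j)·(k,h,l) = (i, g·h, l), (i,g,j)* = (j, g⁻¹, i), (i,g,j)+(k,h,l) = (k, g+h, j), and -(i,g,j) = (j, -g, i), where g⁻¹ is the multiplicative inverse and -g the additive inverse in G. Then (S,+,·,-,*) is a square skew left brace: (S,+,-) and (S,·,*) are regular ⋆-semigroups, x·(y+z) = x·y + (-x) + x·z, (-x) + x = x·x*, x + (-x) = x*·x, and x·x* = x·y·y*·x* for all x,y,z ∈ S. -/
import Mathlib


theorem stmt4 {I G : Type*} [Nonempty I] [AddGroup G] [Group G]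
    (hG : ∀ x y z : G, x * (y + z) = x * y + -x + x * z) :
    let S := I × G × I
    let mul : S → S → S := fun a b => (a.1, a.2.1 * b.2.1, b.2.2)
    let st : S → S := fun a => (a.2.2, a.2.1⁻¹, a.1)
    let add : S → S → S := fun a b => (b.1, a.2.1 + b.2.1, a.2.2)
    let neg : S → S := fun a => (a.2.2, -a.2.1, a.1)
    (∀ x y z : S, add (add x y) z = add x (add y z)) ∧
    (∀ x : S, add (add x (neg x)) x = x) ∧
    (∀ x : S, neg (neg x) = x) ∧
    (∀ x y : S, neg (add x y) = add (neg y) (neg x)) ∧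
    (∀ x y z : S, mul (mul x y) z = mul x (mul y z)) ∧
    (∀ x : S, mul (mul x (st x)) x = x) ∧
    (∀ x : S, st (st x) = x) ∧
    (∀ x y : S, st (mul x y) = mul (st y) (st x)) ∧
    (∀ x y z : S, mul x (add y z) = add (add (mul x y) (neg x)) (mul x z)) ∧
    (∀ x : S, add (neg x) x = mul x (st x)) ∧
    (∀ x : S, add x (neg x) = mul (st x) x) ∧
    (∀ x y : S, mul x (st x) = mul (mul (mul x y) (st y)) (st x)) := by
  have h01 : (0:G) = 1 := by
    have h := hG 1 0 0
    simpa [eq_comm, neg_eq_iff_eq_neg] using h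
  have h1a : ∀ a : G, 1 + a = a := by intro a; rw [← h01, zero_add]
  have ha1 : ∀ a : G, a + 1 = a := by intro a; rw [← h01, add_zero]
  intro S mul st add neg
  refine ⟨?_, ?_, ?_, ?_, ?_, ?_, ?_, ?_, ?_, ?_, ?_, ?_⟩ <;>
    intros <;> simp [S, mul, st, add, neg, hG, h01, h1a, ha1, add_assoc, mul_assoc]
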